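/- Let V be a d×n real matrix with columns v_1,…,v_n, let C = VᵀV, let s be an integer with 1 ≤ s ≤ d, and let x̂ ∈ [0,1]ⁿ with ∑_{i=1}^n x̂_i = s. Let λ₁ ≥ ⋯ ≥ λ_d ≥ 0 be the eigenvalues of X̂ = ∑_{i=1}^n x̂_i v_i v_iᵀ and let k = k(λ,s). Then D := ∑_{S ⊆ {1,…,n}, |S|=s} ∏_{i∈S} x̂_i > 0, and (1/D) · ∑_{S ⊆ {1,…,n}, |S|=s} (∏_{i∈S} x̂_i) · det(C_{S,S}) ≥ ((s/n)^s · C(n,s))^{-1} · (∏_{i=1}^k λ_i) · ((1/(s−k)) ∑_{i=k+1}^d λ_i)^{s−k}. (This is the expected value of det(C_{S̃,S̃}) when a size-s set S̃ is sampled with probability proportional to ∏_{i∈S̃} x̂_i; it yields the (s·log s + log C(n,s) − s·log n + α)-approximation bound of the sampling algorithm for MESP.) -/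

import Mathlib

open Matrix Finset

noncomputable section

/-- `lam` lists the eigenvalues (with multiplicity) of the real symmetric matrix `X`,
via an orthogonal spectral decomposition. -/
def IsSpectralDecomp {m : Type*} [Fintype m] [DecidableEq m]
    (X : Matrix m m ℝ) (lam : m → ℝ) : Prop :=
  ∃ Q : Matrix m m ℝ, Q * Qᵀ = 1 ∧ X = Q * Matrix.diagonal lam * Qᵀ

/-- Principal submatrix `C_{S,S}`. -/
def subSub {n : ℕ} (C : Matrix (Fin n) (Fin n) ℝ) (S : Finset (Fin n)) :
    Matrix {i // i ∈ S} {i // i ∈ S} ℝ :=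
  Matrix.of fun a b => C a.1 b.1

/-- The value `λ_{i+1}` (1-based), i.e. the coordinate of `lam` of 0-based index `i`;
`0` when out of range. -/
def extVal {d : ℕ} (lam : Fin d → ℝ) : ℕ → ℝ :=
  fun i => if h : i < d then lam ⟨i, h⟩ else 0

/-- `∑_{i=k+1}^d λ_i` (1-based), i.e. the sum of the coordinates of 0-based index `≥ k`. -/
def tailSum {d : ℕ} (lam : Fin d → ℝ) (k : ℕ) : ℝ :=
  ∑ i ∈ Finset.univ.filter (fun i : Fin d => k ≤ (i : ℕ)), lam i

/-- `k = k(λ, s)`: an integer `0 ≤ k < s` with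
`λ_k > (1/(s-k)) ∑_{i=k+1}^d λ_i ≥ λ_{k+1}`, with the convention `λ₀ = +∞`. -/
def IsKIndex {d : ℕ} (lam : Fin d → ℝ) (s k : ℕ) : Prop :=
  k < s ∧ extVal lam k ≤ tailSum lam k / ((s : ℝ) - k) ∧
    (k = 0 ∨ tailSum lam k / ((s : ℝ) - k) < extVal lam (k - 1))

/-- `P` is the Moore–Penrose pseudoinverse of `X`. -/
def IsPseudoInv {d : ℕ} (X P : Matrix (Fin d) (Fin d) ℝ) : Prop :=
  X * P * X = X ∧ P * X * P = P ∧ (X * P)ᵀ = X * P ∧ (P * X)ᵀ = P * X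

open Polynomial

set_option linter.unusedSectionVars false

section Esym

variable {ι : Type*} [DecidableEq ι]

/-- elementary symmetric polynomial over a finset -/
def esym (A : Finset ι) (r : ℕ) (f : ι → ℝ) : ℝ :=
  ∑ S ∈ A.powersetCard r, ∏ i ∈ S, f i

def esymP (A : Finset ι) (f : ι → ℝ) : Polynomial ℝ :=
  ∏ i ∈ A, (1 + Polynomial.C (f i) * Polynomial.X)

lemma esymP_coeff (A : Finset ι) (f : ι → ℝ) (r : ℕ) :
    (esymP A f).coeff r = esym A r f := by
  have h1 : esymP A f = ∑ t ∈ A.powerset, Polynomial.C (∏ i ∈ t, f i) * Polynomial.X ^ t.card := by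
    unfold esymP
    have := Finset.prod_add (fun i => Polynomial.C (f i) * Polynomial.X) (fun _ => (1 : ℝ[X])) A
    simp only [Finset.prod_const_one, mul_one] at this
    rw [show (∏ i ∈ A, (1 + Polynomial.C (f i) * Polynomial.X))
        = ∏ i ∈ A, (Polynomial.C (f i) * Polynomial.X + 1) by
      exact Finset.prod_congr rfl fun i _ => add_comm _ _, this]
    refine Finset.sum_congr rfl fun t ht => ?_
    rw [Finset.prod_mul_distrib, Finset.prod_const, map_prod]
  rw [h1, Polynomial.finset_sum_coeff]
  simp only [Polynomial.coeff_C_mul, Polynomial.coeff_X_pow, mul_ite, mul_one, mul_zero]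
  rw [esym, Finset.powersetCard_eq_filter, Finset.sum_filter]
  exact Finset.sum_congr rfl fun t _ => by simp [eq_comm]

lemma esym_nonneg (A : Finset ι) (r : ℕ) (f : ι → ℝ) (h : ∀ i ∈ A, 0 ≤ f i) :
    0 ≤ esym A r f := by
  refine Finset.sum_nonneg fun S hS => Finset.prod_nonneg fun i hi => ?_
  exact h i ((Finset.mem_powersetCard.mp hS).1 hi)

lemma esym_congr (A : Finset ι) (r : ℕ) (f g : ι → ℝ) (h : ∀ i ∈ A, f i = g i) :
    esym A r f = esym A r g := by
  refine Finset.sum_congr rfl fun S hS => Finset.prod_congr rfl fun i hi => ?_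
  exact h i ((Finset.mem_powersetCard.mp hS).1 hi)

lemma esym_zero (A : Finset ι) (f : ι → ℝ) : esym A 0 f = 1 := by
  simp [esym]

lemma esym_insert (A : Finset ι) (a : ι) (ha : a ∉ A) (f : ι → ℝ) (r : ℕ) :
    esym (insert a A) (r + 1) f = esym A (r + 1) f + f a * esym A r f := by
  rw [← esymP_coeff, ← esymP_coeff, ← esymP_coeff]
  rw [esymP, Finset.prod_insert ha, ← esymP]
  rw [add_mul, one_mul, Polynomial.coeff_add, mul_assoc, Polynomial.coeff_C_mul,
    Polynomial.coeff_X_mul]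

lemma esym_one (A : Finset ι) (f : ι → ℝ) : esym A 1 f = ∑ i ∈ A, f i := by
  classical
  induction A using Finset.induction with
  | empty => simp [esym, Finset.powersetCard_eq_filter, Finset.filter_singleton]
  | @insert a A ha ih => rw [esym_insert _ _ ha, ih, esym_zero, Finset.sum_insert ha]; ring

lemma esym_smooth (A : Finset ι) (i j : ι) (hi : i ∈ A) (hj : j ∈ A) (hij : i ≠ j)
    (f g : ι → ℝ) (hagree : ∀ a ∈ A, a ≠ i → a ≠ j → f a = g a)
    (hnn : ∀ a ∈ A, a ≠ i → a ≠ j → 0 ≤ f a)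
    (hsum : f i + f j = g i + g j) (hprod : f i * f j ≤ g i * g j) (r : ℕ) :
    esym A r f ≤ esym A r g := by
  classical
  set A'' := (A.erase i).erase j with hA''
  have hjA : j ∈ A.erase i := Finset.mem_erase.mpr ⟨(Ne.symm hij), hj⟩
  have hjni : j ∉ A'' := Finset.notMem_erase _ _
  have hini : i ∉ insert j A'' := by
    simp only [Finset.mem_insert, hA'']
    push_neg
    exact ⟨hij, fun h => (Finset.notMem_erase i A) (Finset.mem_of_mem_erase h)⟩
  have hA : A = insert i (insert j A'') := by
    rw [hA'', Finset.insert_erase hjA, Finset.insert_erase hi]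
  have hmem : ∀ a ∈ A'', a ∈ A ∧ a ≠ i ∧ a ≠ j := by
    intro a ha
    rw [hA''] at ha
    exact ⟨Finset.mem_of_mem_erase (Finset.mem_of_mem_erase ha),
      Finset.ne_of_mem_erase (Finset.mem_of_mem_erase ha), Finset.ne_of_mem_erase ha⟩
  have hcongr : ∀ m, esym A'' m f = esym A'' m g := by
    intro m
    refine esym_congr _ _ _ _ fun a ha => ?_
    obtain ⟨h1, h2, h3⟩ := hmem a ha
    exact hagree a h1 h2 h3
  have hnn' : ∀ m, 0 ≤ esym A'' m f := by
    intro m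
    refine esym_nonneg _ _ _ fun a ha => ?_
    obtain ⟨h1, h2, h3⟩ := hmem a ha
    exact hnn a h1 h2 h3
  rw [hA]
  match r with
  | 0 => rw [esym_zero, esym_zero]
  | 1 =>
    rw [esym_one, esym_one, Finset.sum_insert hini, Finset.sum_insert hjni,
      Finset.sum_insert hini, Finset.sum_insert hjni]
    have : ∑ a ∈ A'', f a = ∑ a ∈ A'', g a := by
      refine Finset.sum_congr rfl fun a ha => ?_
      obtain ⟨h1, h2, h3⟩ := hmem a ha
      exact hagree a h1 h2 h3
    rw [← add_assoc, ← add_assoc, this]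
    have := hsum
    linarith
  | (m + 2) =>
    rw [esym_insert _ _ hini, esym_insert _ _ hjni, esym_insert _ _ hjni,
      esym_insert _ _ hini, esym_insert _ _ hjni, esym_insert _ _ hjni]
    have key : ∀ h : ι → ℝ,
        esym A'' (m+2) h + h j * esym A'' (m+1) h + h i * (esym A'' (m+1) h + h j * esym A'' m h)
        = esym A'' (m+2) h + (h i + h j) * esym A'' (m+1) h + (h i * h j) * esym A'' m h := by
      intro h; ring
    rw [key, key, hcongr (m+2), hcongr (m+1), hcongr m]
    have h1 : (f i + f j) * esym A'' (m+1) g = (g i + g j) * esym A'' (m+1) g := by rw [hsum]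
    have h2 : f i * f j * esym A'' m g ≤ g i * g j * esym A'' m g := by
      have := hnn' m
      rw [hcongr m] at this
      exact mul_le_mul_of_nonneg_right hprod this
    linarith

lemma esym_all_eq (s : ℕ) (A : Finset ι) (m : ℝ) (x : ι → ℝ) (hall : ∀ i ∈ A, x i = m) :
    esym A s x = (A.card.choose s) * m ^ s := by
  unfold esym
  rw [Finset.sum_congr rfl (fun S hS => ?_), Finset.sum_const, ← Finset.card_powersetCard,
    nsmul_eq_mul, Finset.card_powersetCard]
  obtain ⟨hSA, hScard⟩ := Finset.mem_powersetCard.mp hS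
  rw [Finset.prod_congr rfl (fun i hi => hall i (hSA hi)), Finset.prod_const, hScard]

lemma maclaurin_aux (s : ℕ) (A : Finset ι) (m : ℝ) :
    ∀ N : ℕ, ∀ x : ι → ℝ, (A.filter (fun i => x i ≠ m)).card ≤ N →
    (∀ i ∈ A, 0 ≤ x i) → (∑ i ∈ A, x i = A.card * m) →
    esym A s x ≤ (A.card.choose s) * m ^ s := by
  intro N
  induction N with
  | zero =>
    intro x hcard hnn hsum
    rw [esym_all_eq s A m x fun i hi => by
      by_contra hne
      have hmem : i ∈ A.filter (fun i => x i ≠ m) := Finset.mem_filter.mpr ⟨hi, hne⟩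
      have hemp : A.filter (fun i => x i ≠ m) = ∅ :=
        Finset.card_eq_zero.mp (Nat.le_zero.mp hcard)
      rw [hemp] at hmem
      exact Finset.notMem_empty i hmem]
  | succ N ih =>
    intro x hcard hnn hsum
    by_cases hall : ∀ i ∈ A, x i = m
    · rw [esym_all_eq s A m x hall]
    · push_neg at hall
      obtain ⟨w, hwA, hwne⟩ := hall
      have hp : ∃ p ∈ A, m < x p := by
        by_contra hno
        push_neg at hno
        have : ∑ i ∈ A, x i < ∑ _i ∈ A, m := by
          refine Finset.sum_lt_sum hno ⟨w, hwA, lt_of_le_of_ne (hno w hwA) hwne⟩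
        rw [Finset.sum_const, nsmul_eq_mul] at this
        linarith [hsum]
      have hq : ∃ q ∈ A, x q < m := by
        by_contra hno
        push_neg at hno
        have : ∑ _i ∈ A, m < ∑ i ∈ A, x i := by
          refine Finset.sum_lt_sum hno ⟨w, hwA, lt_of_le_of_ne (hno w hwA) (Ne.symm hwne)⟩
        rw [Finset.sum_const, nsmul_eq_mul] at this
        linarith [hsum]
      obtain ⟨p, hpA, hpm⟩ := hp
      obtain ⟨q, hqA, hqm⟩ := hq
      have hpq : p ≠ q := fun h => by rw [h] at hpm; linarith
      have hm0 : 0 ≤ m := le_trans (hnn q hqA) (le_of_lt hqm)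
      set g := Function.update (Function.update x p m) q (x p + x q - m) with hg
      have hgp : g p = m := by
        rw [hg, Function.update_of_ne hpq, Function.update_self]
      have hgq : g q = x p + x q - m := by rw [hg, Function.update_self]
      have hgother : ∀ a, a ≠ p → a ≠ q → g a = x a := by
        intro a hap haq
        rw [hg, Function.update_of_ne haq, Function.update_of_ne hap]
      have hsmooth : esym A s x ≤ esym A s g := by
        refine esym_smooth A p q hpA hqA hpq x g
          (fun a _ hap haq => (hgother a hap haq).symm)
          (fun a ha _ _ => hnn a ha) (by rw [hgp, hgq]; ring) ?_ s
        rw [hgp, hgq]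
        nlinarith [(x p - m) * (m - x q)]
      refine le_trans hsmooth (ih g ?_ ?_ ?_)
      · have hsub : A.filter (fun i => g i ≠ m) ⊆ (A.filter (fun i => x i ≠ m)).erase p := by
          intro a ha
          obtain ⟨haA, hane⟩ := Finset.mem_filter.mp ha
          have hap : a ≠ p := fun h => hane (h ▸ hgp)
          refine Finset.mem_erase.mpr ⟨hap, Finset.mem_filter.mpr ⟨haA, ?_⟩⟩
          by_cases haq : a = q
          · subst haq; exact ne_of_lt hqm
          · rw [← hgother a hap haq]; exact hane
        have h1 := Finset.card_le_card hsub
        have h2 : p ∈ A.filter (fun i => x i ≠ m) :=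
          Finset.mem_filter.mpr ⟨hpA, ne_of_gt hpm⟩
        rw [Finset.card_erase_of_mem h2] at h1
        omega
      · intro a ha
        by_cases hap : a = p
        · rw [hap, hgp]; exact hm0
        by_cases haq : a = q
        · rw [haq, hgq]; have := hnn q hqA; linarith
        · rw [hgother a hap haq]; exact hnn a ha
      · have hpe : p ∈ A.erase q := Finset.mem_erase.mpr ⟨hpq, hpA⟩
        have e1 : ∑ i ∈ A, g i = (x p + x q - m) + ∑ i ∈ A.erase q, Function.update x p m i := by
          rw [hg, Finset.sum_update_of_mem hqA, Finset.erase_eq]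
        have e2 : ∑ i ∈ A.erase q, Function.update x p m i
            = m + ∑ i ∈ (A.erase q).erase p, x i := by
          rw [Finset.sum_update_of_mem hpe, Finset.erase_eq, Finset.erase_eq]
        have e3 : ∑ i ∈ A.erase q, x i = x p + ∑ i ∈ (A.erase q).erase p, x i := by
          rw [Finset.add_sum_erase _ _ hpe]
        have e4 : ∑ i ∈ A, x i = x q + ∑ i ∈ A.erase q, x i := by
          rw [Finset.add_sum_erase _ _ hqA]
        rw [e1, e2]
        linarith [hsum]

lemma sum_binary (B : Finset ι) (μ : ι → ℝ) (c : ℝ) (h : ∀ i ∈ B, μ i = 0 ∨ μ i = c) :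
    ∑ i ∈ B, μ i = (B.filter (fun i => μ i = c)).card * c := by
  rw [← Finset.sum_filter_add_sum_filter_not B (fun i => μ i = c)]
  have h1 : ∑ i ∈ B.filter (fun i => μ i = c), μ i
      = (B.filter (fun i => μ i = c)).card * c := by
    rw [Finset.sum_congr rfl (fun i hi => (Finset.mem_filter.mp hi).2),
      Finset.sum_const, nsmul_eq_mul]
  have h2 : ∑ i ∈ B.filter (fun i => ¬ μ i = c), μ i = 0 := by
    refine Finset.sum_eq_zero fun i hi => ?_
    obtain ⟨hiB, hine⟩ := Finset.mem_filter.mp hi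
    exact (h i hiB).resolve_right hine
  rw [h1, h2, add_zero]

lemma esym_lower_discrete (r : ℕ) (A : Finset ι) (c : ℝ) (hc : 0 < c) (μ : ι → ℝ)
    (hnn : ∀ i ∈ A, 0 ≤ μ i) (hsum : ∑ i ∈ A, μ i = r * c)
    (hbin : ∀ i ∈ A, μ i = 0 ∨ μ i = c) :
    c ^ r ≤ esym A r μ := by
  set Z := A.filter (fun i => μ i = c) with hZ
  have hcard : Z.card = r := by
    have := sum_binary A μ c hbin
    rw [hsum] at this
    exact_mod_cast (mul_right_cancel₀ (ne_of_gt hc) this).symm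
  have hZmem : Z ∈ A.powersetCard r :=
    Finset.mem_powersetCard.mpr ⟨Finset.filter_subset _ _, hcard⟩
  have hterm : ∏ i ∈ Z, μ i = c ^ r := by
    rw [Finset.prod_congr rfl (fun i hi => (Finset.mem_filter.mp hi).2),
      Finset.prod_const, hcard]
  calc c ^ r = ∏ i ∈ Z, μ i := hterm.symm
    _ ≤ esym A r μ := by
      unfold esym
      refine Finset.single_le_sum (f := fun S => ∏ i ∈ S, μ i)
        (fun S hS => Finset.prod_nonneg fun i hi => ?_) hZmem
      exact hnn i ((Finset.mem_powersetCard.mp hS).1 hi)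

lemma sum_update_pair (A : Finset ι) (p q : ι) (hp : p ∈ A) (hq : q ∈ A) (hpq : p ≠ q)
    (μ : ι → ℝ) (a b : ℝ) (hab : a + b = μ p + μ q) :
    ∑ i ∈ A, Function.update (Function.update μ p a) q b i = ∑ i ∈ A, μ i := by
  have hpe : p ∈ A.erase q := Finset.mem_erase.mpr ⟨hpq, hp⟩
  have e1 : ∑ i ∈ A, Function.update (Function.update μ p a) q b i
      = b + ∑ i ∈ A.erase q, Function.update μ p a i := by
    rw [Finset.sum_update_of_mem hq, Finset.erase_eq]
  have e2 : ∑ i ∈ A.erase q, Function.update μ p a i = a + ∑ i ∈ (A.erase q).erase p, μ i := by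
    rw [Finset.sum_update_of_mem hpe, Finset.erase_eq, Finset.erase_eq]
  have e3 : ∑ i ∈ A.erase q, μ i = μ p + ∑ i ∈ (A.erase q).erase p, μ i :=
    (Finset.add_sum_erase _ _ hpe).symm
  have e4 : ∑ i ∈ A, μ i = μ q + ∑ i ∈ A.erase q, μ i := (Finset.add_sum_erase _ _ hq).symm
  rw [e1, e2]
  linarith

lemma esym_lower_aux (r : ℕ) (A : Finset ι) (c : ℝ) (hc : 0 < c) :
    ∀ N : ℕ, ∀ μ : ι → ℝ, (A.filter (fun i => 0 < μ i ∧ μ i < c)).card ≤ N →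
    (∀ i ∈ A, 0 ≤ μ i) → (∀ i ∈ A, μ i ≤ c) → (∑ i ∈ A, μ i = r * c) →
    c ^ r ≤ esym A r μ := by
  intro N
  induction N with
  | zero =>
    intro μ hcard hnn hub hsum
    refine esym_lower_discrete r A c hc μ hnn hsum fun i hi => ?_
    have hnotF : ¬ (0 < μ i ∧ μ i < c) := by
      intro h
      have hemp : A.filter (fun i => 0 < μ i ∧ μ i < c) = ∅ :=
        Finset.card_eq_zero.mp (Nat.le_zero.mp hcard)
      have : i ∈ A.filter (fun i => 0 < μ i ∧ μ i < c) := Finset.mem_filter.mpr ⟨hi, h⟩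
      rw [hemp] at this
      exact Finset.notMem_empty i this
    by_cases h0 : μ i = 0
    · left; exact h0
    · right
      have hpos : 0 < μ i := lt_of_le_of_ne (hnn i hi) (Ne.symm h0)
      have : ¬ μ i < c := fun hlt => hnotF ⟨hpos, hlt⟩
      linarith [hub i hi]
  | succ N ih =>
    intro μ hcard hnn hub hsum
    by_cases htwo : ∃ p ∈ A.filter (fun i => 0 < μ i ∧ μ i < c),
        ∃ q ∈ A.filter (fun i => 0 < μ i ∧ μ i < c), p ≠ q
    · obtain ⟨p, hpF, q, hqF, hpq⟩ := htwo
      have hm_hpA := Finset.mem_filter.mp hpF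
      have hpA := hm_hpA.1
      have hp0 := hm_hpA.2.1
      have hpc := hm_hpA.2.2
      have hm_hqA := Finset.mem_filter.mp hqF
      have hqA := hm_hqA.1
      have hq0 := hm_hqA.2.1
      have hqc := hm_hqA.2.2
      rcases le_or_gt (μ p + μ q) c with hle | hgt
      · -- send p to 0, q to μ p + μ q
        set g := Function.update (Function.update μ p 0) q (μ p + μ q) with hg
        have hgp : g p = 0 := by
          rw [hg, Function.update_of_ne hpq, Function.update_self]
        have hgq : g q = μ p + μ q := by rw [hg, Function.update_self]
        have hgother : ∀ a, a ≠ p → a ≠ q → g a = μ a := by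
          intro a hap haq
          rw [hg, Function.update_of_ne haq, Function.update_of_ne hap]
        have hmono : esym A r g ≤ esym A r μ := by
          refine esym_smooth A p q hpA hqA hpq g μ
            (fun a _ hap haq => hgother a hap haq)
            (fun a ha hap haq => (hgother a hap haq) ▸ hnn a ha)
            (by rw [hgp, hgq]; ring) ?_ r
          rw [hgp, hgq, zero_mul]
          positivity
        refine le_trans (ih g ?_ ?_ ?_ ?_) hmono
        · have hsub : A.filter (fun i => 0 < g i ∧ g i < c)
              ⊆ (A.filter (fun i => 0 < μ i ∧ μ i < c)).erase p := by
            intro a ha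
            have hm_a := Finset.mem_filter.mp ha
            have haA := hm_a.1
            have ha0 := hm_a.2.1
            have hac := hm_a.2.2
            have hap : a ≠ p := by
              intro h; rw [h, hgp] at ha0; exact lt_irrefl 0 ha0
            refine Finset.mem_erase.mpr ⟨hap, Finset.mem_filter.mpr ⟨haA, ?_⟩⟩
            by_cases haq : a = q
            · rw [haq]; exact ⟨hq0, lt_of_le_of_lt (le_of_eq rfl) (by rw [haq, hgq] at hac; linarith)⟩
            · rw [← hgother a hap haq]; exact ⟨ha0, hac⟩
          have h1 := Finset.card_le_card hsub
          rw [Finset.card_erase_of_mem hpF] at h1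
          omega
        · intro a ha
          by_cases hap : a = p
          · rw [hap, hgp]
          by_cases haq : a = q
          · rw [haq, hgq]; linarith
          · rw [hgother a hap haq]; exact hnn a ha
        · intro a ha
          by_cases hap : a = p
          · rw [hap, hgp]; exact le_of_lt hc
          by_cases haq : a = q
          · rw [haq, hgq]; exact hle
          · rw [hgother a hap haq]; exact hub a ha
        · rw [hg, sum_update_pair A p q hpA hqA hpq μ 0 (μ p + μ q) (by ring), hsum]
      · -- send q to c, p to μ p + μ q - c
        set g := Function.update (Function.update μ p (μ p + μ q - c)) q c with hg
        have hgp : g p = μ p + μ q - c := by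
          rw [hg, Function.update_of_ne hpq, Function.update_self]
        have hgq : g q = c := by rw [hg, Function.update_self]
        have hgother : ∀ a, a ≠ p → a ≠ q → g a = μ a := by
          intro a hap haq
          rw [hg, Function.update_of_ne haq, Function.update_of_ne hap]
        have hmono : esym A r g ≤ esym A r μ := by
          refine esym_smooth A p q hpA hqA hpq g μ
            (fun a _ hap haq => hgother a hap haq)
            (fun a ha hap haq => (hgother a hap haq) ▸ hnn a ha)
            (by rw [hgp, hgq]; ring) ?_ r
          rw [hgp, hgq]
          nlinarith [(c - μ p) * (c - μ q)]
        refine le_trans (ih g ?_ ?_ ?_ ?_) hmono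
        · have hsub : A.filter (fun i => 0 < g i ∧ g i < c)
              ⊆ (A.filter (fun i => 0 < μ i ∧ μ i < c)).erase q := by
            intro a ha
            have hm_a := Finset.mem_filter.mp ha
            have haA := hm_a.1
            have ha0 := hm_a.2.1
            have hac := hm_a.2.2
            have haq : a ≠ q := by
              intro h; rw [h, hgq] at hac; exact lt_irrefl c hac
            refine Finset.mem_erase.mpr ⟨haq, Finset.mem_filter.mpr ⟨haA, ?_⟩⟩
            by_cases hap : a = p
            · rw [hap]; exact ⟨hp0, hpc⟩
            · rw [← hgother a hap haq]; exact ⟨ha0, hac⟩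
          have h1 := Finset.card_le_card hsub
          rw [Finset.card_erase_of_mem hqF] at h1
          omega
        · intro a ha
          by_cases hap : a = p
          · rw [hap, hgp]; linarith
          by_cases haq : a = q
          · rw [haq, hgq]; exact le_of_lt hc
          · rw [hgother a hap haq]; exact hnn a ha
        · intro a ha
          by_cases hap : a = p
          · rw [hap, hgp]; linarith
          by_cases haq : a = q
          · rw [haq, hgq]
          · rw [hgother a hap haq]; exact hub a ha
        · rw [hg, sum_update_pair A p q hpA hqA hpq μ (μ p + μ q - c) c (by ring), hsum]
    · -- at most one element strictly between 0 and c
      push_neg at htwo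
      rcases Finset.eq_empty_or_nonempty (A.filter (fun i => 0 < μ i ∧ μ i < c)) with hemp | ⟨w, hw⟩
      · refine esym_lower_discrete r A c hc μ hnn hsum fun i hi => ?_
        have hnotF : ¬ (0 < μ i ∧ μ i < c) := by
          intro h
          have : i ∈ A.filter (fun i => 0 < μ i ∧ μ i < c) := Finset.mem_filter.mpr ⟨hi, h⟩
          rw [hemp] at this
          exact Finset.notMem_empty i this
        by_cases h0 : μ i = 0
        · left; exact h0
        · right
          have hpos : 0 < μ i := lt_of_le_of_ne (hnn i hi) (Ne.symm h0)
          have : ¬ μ i < c := fun hlt => hnotF ⟨hpos, hlt⟩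
          linarith [hub i hi]
      · exfalso
        have hm_w := Finset.mem_filter.mp hw
        have hwA := hm_w.1
        have hw0 := hm_w.2.1
        have hwc := hm_w.2.2
        have hbin : ∀ i ∈ A.erase w, μ i = 0 ∨ μ i = c := by
          intro i hi
          obtain ⟨hiw, hiA⟩ := Finset.mem_erase.mp hi
          have hnotF : ¬ (0 < μ i ∧ μ i < c) := by
            intro h
            exact hiw (htwo i (Finset.mem_filter.mpr ⟨hiA, h⟩) w hw)
          by_cases h0 : μ i = 0
          · left; exact h0
          · right
            have hpos : 0 < μ i := lt_of_le_of_ne (hnn i hiA) (Ne.symm h0)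
            have : ¬ μ i < c := fun hlt => hnotF ⟨hpos, hlt⟩
            linarith [hub i hiA]
        have hrest := sum_binary (A.erase w) μ c hbin
        have htot : μ w + ∑ i ∈ A.erase w, μ i = ↑r * c := by
          rw [Finset.add_sum_erase _ _ hwA, hsum]
        set Zc := ((A.erase w).filter (fun i => μ i = c)).card with hZc
        rw [hrest] at htot
        have h1 : (Zc : ℝ) < r := by
          rw [← mul_lt_mul_iff_left₀ hc]
          linarith
        have h2 : (r : ℝ) < Zc + 1 := by
          rw [← mul_lt_mul_iff_left₀ hc]
          have : ((Zc : ℝ) + 1) * c = Zc * c + c := by ring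
          linarith
        have h1' : Zc < r := by exact_mod_cast h1
        have h2' : r < Zc + 1 := by exact_mod_cast h2
        omega

end Esym

section MatrixExpand

lemma det_piecewise_rows {m : ℕ} (M : Matrix (Fin m) (Fin m) ℝ) (S : Finset (Fin m)) :
    Matrix.det (Matrix.of (S.piecewise ((Polynomial.X : ℝ[X]) • M.map Polynomial.C)
        (1 : Matrix (Fin m) (Fin m) ℝ[X])))
      = (Polynomial.X : ℝ[X]) ^ S.card * Polynomial.C ((subSub M S).det) := by
  classical
  set A : Matrix (Fin m) (Fin m) ℝ[X] := Matrix.of (S.piecewise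
    ((Polynomial.X : ℝ[X]) • M.map Polynomial.C) (1 : Matrix (Fin m) (Fin m) ℝ[X])) with hA
  let e : {i // i ∈ S} ⊕ {i // ¬ i ∈ S} ≃ Fin m := Equiv.sumCompl (· ∈ S)
  have hdet : A.det = (A.submatrix e e).det := (Matrix.det_submatrix_equiv_self e A).symm
  have hrow_mem : ∀ i : Fin m, i ∈ S →
      A i = ((Polynomial.X : ℝ[X]) • M.map Polynomial.C) i :=
    fun i hi => Finset.piecewise_eq_of_mem _ _ _ hi
  have hrow_not : ∀ i : Fin m, i ∉ S → A i = (1 : Matrix (Fin m) (Fin m) ℝ[X]) i :=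
    fun i hi => Finset.piecewise_eq_of_notMem _ _ _ hi
  have hblocks : A.submatrix e e = Matrix.fromBlocks
      ((Polynomial.X : ℝ[X]) • (subSub M S).map Polynomial.C)
      (Matrix.of fun (a : {i // i ∈ S}) (b : {i // ¬ i ∈ S}) =>
        (Polynomial.X : ℝ[X]) * Polynomial.C (M a.1 b.1))
      0 1 := by
    refine Matrix.ext fun i j => ?_
    cases i with
    | inl a =>
      cases j with
      | inl b =>
        rw [Matrix.submatrix_apply, show e (Sum.inl a) = a.1 from rfl,
          show e (Sum.inl b) = b.1 from rfl, hrow_mem a.1 a.2]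
        simp [subSub, Matrix.smul_apply, Matrix.map_apply, Matrix.fromBlocks_apply₁₁]
      | inr b =>
        rw [Matrix.submatrix_apply, show e (Sum.inl a) = a.1 from rfl,
          show e (Sum.inr b) = b.1 from rfl, hrow_mem a.1 a.2]
        simp [Matrix.smul_apply, Matrix.map_apply, Matrix.fromBlocks_apply₁₂]
    | inr a =>
      cases j with
      | inl b =>
        rw [Matrix.submatrix_apply, show e (Sum.inr a) = a.1 from rfl,
          show e (Sum.inl b) = b.1 from rfl, hrow_not a.1 a.2,
          Matrix.one_apply_ne (fun h : (a.1 : Fin m) = b.1 => a.2 (h ▸ b.2))]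
        simp [Matrix.fromBlocks_apply₂₁]
      | inr b =>
        rw [Matrix.submatrix_apply, show e (Sum.inr a) = a.1 from rfl,
          show e (Sum.inr b) = b.1 from rfl, hrow_not a.1 a.2]
        simp [Matrix.one_apply, Matrix.fromBlocks_apply₂₂, Subtype.ext_iff]
  rw [hdet, hblocks, Matrix.det_fromBlocks_zero₂₁, Matrix.det_one, mul_one,
    Matrix.det_smul, ← RingHom.mapMatrix_apply, ← RingHom.map_det]
  congr 1
  rw [Fintype.card_coe]

lemma det_one_add_X_smul_expand {m : ℕ} (M : Matrix (Fin m) (Fin m) ℝ) :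
    ((1 : Matrix (Fin m) (Fin m) ℝ[X]) + (Polynomial.X : ℝ[X]) • M.map Polynomial.C).det
      = ∑ S : Finset (Fin m), (Polynomial.X : ℝ[X]) ^ S.card * Polynomial.C ((subSub M S).det) := by
  classical
  have h2 := (Matrix.detRowAlternating (R := ℝ[X]) (n := Fin m)).toMultilinearMap.map_add_univ
    ((Polynomial.X : ℝ[X]) • M.map Polynomial.C) (1 : Matrix (Fin m) (Fin m) ℝ[X])
  calc ((1 : Matrix (Fin m) (Fin m) ℝ[X]) + (Polynomial.X : ℝ[X]) • M.map Polynomial.C).det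
      = (((Polynomial.X : ℝ[X]) • M.map Polynomial.C) + 1 : Matrix (Fin m) (Fin m) ℝ[X]).det := by
        rw [add_comm]
    _ = ∑ S : Finset (Fin m), (Matrix.detRowAlternating (R := ℝ[X]) (n := Fin m)).toMultilinearMap
          (S.piecewise ((Polynomial.X : ℝ[X]) • M.map Polynomial.C)
            (1 : Matrix (Fin m) (Fin m) ℝ[X])) := h2
    _ = ∑ S : Finset (Fin m), (Polynomial.X : ℝ[X]) ^ S.card * Polynomial.C ((subSub M S).det) :=
        Finset.sum_congr rfl fun S _ => det_piecewise_rows M S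

end MatrixExpand

section KeyId

lemma coeff_sum_finsets {m : ℕ} (c : Finset (Fin m) → ℝ) (s : ℕ) :
    (∑ S : Finset (Fin m), (Polynomial.X : ℝ[X]) ^ S.card * Polynomial.C (c S)).coeff s
      = ∑ S ∈ (Finset.univ : Finset (Fin m)).powersetCard s, c S := by
  rw [Polynomial.finset_sum_coeff, Finset.powersetCard_eq_filter, Finset.powerset_univ,
    Finset.sum_filter]
  refine Finset.sum_congr rfl fun S _ => ?_
  rw [mul_comm, Polynomial.coeff_C_mul, Polynomial.coeff_X_pow]
  by_cases h : S.card = s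
  · simp [h]
  · simp [h, Ne.symm h]

lemma det_one_add_X_smul_conj (dd : ℕ) (Q : Matrix (Fin dd) (Fin dd) ℝ) (hQ : Q * Qᵀ = 1)
    (lam : Fin dd → ℝ) :
    ((1 : Matrix (Fin dd) (Fin dd) ℝ[X]) +
        (Polynomial.X : ℝ[X]) • ((Q * Matrix.diagonal lam * Qᵀ).map Polynomial.C)).det
      = ∏ i, (1 + Polynomial.C (lam i) * Polynomial.X) := by
  set Q' : Matrix (Fin dd) (Fin dd) ℝ[X] := Q.map Polynomial.C with hQ'def
  set Qt : Matrix (Fin dd) (Fin dd) ℝ[X] := Qᵀ.map Polynomial.C with hQtdef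
  have hQ1 : Q' * Qt = 1 := by
    rw [hQ'def, hQtdef, ← Matrix.map_mul, hQ]
    exact Matrix.map_one _ (map_zero _) (map_one _)
  set D' : Matrix (Fin dd) (Fin dd) ℝ[X] :=
    Matrix.diagonal (fun i => (1 : ℝ[X]) + Polynomial.X * Polynomial.C (lam i)) with hD'def
  have hconj : (1 : Matrix (Fin dd) (Fin dd) ℝ[X]) +
      (Polynomial.X : ℝ[X]) • ((Q * Matrix.diagonal lam * Qᵀ).map Polynomial.C)
      = Q' * D' * Qt := by
    have hDsplit : D' = 1 + (Polynomial.X : ℝ[X]) • (Matrix.diagonal lam).map Polynomial.C := by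
      rw [hD'def, Matrix.diagonal_map (map_zero _)]
      refine Matrix.ext fun i j => ?_
      by_cases h : i = j
      · subst h
        simp [Matrix.diagonal_apply_eq, Matrix.one_apply_eq, Matrix.smul_apply]
      · simp [Matrix.diagonal_apply_ne _ h, Matrix.one_apply_ne h, Matrix.smul_apply]
    rw [hDsplit, Matrix.mul_add, Matrix.add_mul, mul_one, hQ1]
    congr 1
    rw [mul_smul_comm, smul_mul_assoc]
    congr 1
    rw [hQ'def, hQtdef, ← Matrix.map_mul, ← Matrix.map_mul]
  rw [hconj, Matrix.det_mul, Matrix.det_mul]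
  have hqq : Q'.det * Qt.det = 1 := by
    rw [← Matrix.det_mul, hQ1, Matrix.det_one]
  calc Q'.det * D'.det * Qt.det = D'.det * (Q'.det * Qt.det) := by ring
    _ = D'.det := by rw [hqq, mul_one]
    _ = ∏ i, (1 + Polynomial.C (lam i) * Polynomial.X) := by
        rw [hD'def, Matrix.det_diagonal]
        exact Finset.prod_congr rfl fun i _ => by rw [mul_comm (Polynomial.X : ℝ[X])]

end KeyId

lemma key_identity {d n : ℕ} (V : Matrix (Fin d) (Fin n) ℝ) (x : Fin n → ℝ)
    (hx0 : ∀ i, 0 ≤ x i) (lam : Fin d → ℝ) (Q : Matrix (Fin d) (Fin d) ℝ) (hQ : Q * Qᵀ = 1)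
    (hdec : (∑ i, x i • vecMulVec (fun a => V a i) (fun a => V a i))
      = Q * Matrix.diagonal lam * Qᵀ) (s : ℕ) :
    ∑ S ∈ (Finset.univ : Finset (Fin n)).powersetCard s,
        (∏ i ∈ S, x i) * (subSub (Vᵀ * V) S).det
      = ∑ T ∈ (Finset.univ : Finset (Fin d)).powersetCard s, ∏ i ∈ T, lam i := by
  classical
  set sq : Fin n → ℝ := fun i => Real.sqrt (x i) with hsq
  set W : Matrix (Fin d) (Fin n) ℝ := V * Matrix.diagonal sq with hWdef
  have hW : ∀ a j, W a j = V a j * sq j := fun a j => by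
    rw [hWdef, Matrix.mul_diagonal]
  have hsq2 : ∀ j, sq j * sq j = x j := fun j => Real.mul_self_sqrt (hx0 j)
  have hXh : W * Wᵀ = Q * Matrix.diagonal lam * Qᵀ := by
    rw [← hdec]
    refine Matrix.ext fun a b => ?_
    rw [Matrix.mul_apply]
    rw [show (∑ i, x i • vecMulVec (fun a => V a i) (fun a => V a i)) a b
      = ∑ j, x j • vecMulVec (fun a => V a j) (fun a => V a j) a b by
        rw [Matrix.sum_apply]
        exact Finset.sum_congr rfl fun j _ => rfl]
    refine Finset.sum_congr rfl fun j _ => ?_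
    rw [Matrix.transpose_apply, hW, hW, smul_eq_mul, Matrix.vecMulVec_apply, ← hsq2 j]
    ring
  have hsubdet : ∀ S : Finset (Fin n),
      (subSub (Wᵀ * W) S).det = (∏ i ∈ S, x i) * (subSub (Vᵀ * V) S).det := by
    intro S
    have hfact : subSub (Wᵀ * W) S
        = Matrix.diagonal (fun a : {i // i ∈ S} => sq a.1) * subSub (Vᵀ * V) S *
          Matrix.diagonal (fun a : {i // i ∈ S} => sq a.1) := by
      refine Matrix.ext fun a b => ?_
      rw [Matrix.mul_diagonal, Matrix.diagonal_mul]
      show (Wᵀ * W) a.1 b.1 = sq a.1 * (subSub (Vᵀ * V) S a b) * sq b.1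
      rw [Matrix.mul_apply]
      show ∑ l, Wᵀ a.1 l * W l b.1 = sq a.1 * ((Vᵀ * V) a.1 b.1) * sq b.1
      rw [Matrix.mul_apply, Finset.mul_sum, Finset.sum_mul]
      refine Finset.sum_congr rfl fun l _ => ?_
      rw [Matrix.transpose_apply, Matrix.transpose_apply, hW, hW]
      ring
    rw [hfact, Matrix.det_mul, Matrix.det_mul, Matrix.det_diagonal]
    have h1 : (∏ a : {i // i ∈ S}, sq a.1) * (subSub (Vᵀ * V) S).det *
        (∏ a : {i // i ∈ S}, sq a.1)
        = (∏ a : {i // i ∈ S}, sq a.1 * sq a.1) * (subSub (Vᵀ * V) S).det := by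
      rw [Finset.prod_mul_distrib]
      ring
    rw [h1]
    congr 1
    rw [Finset.prod_congr rfl fun a _ => hsq2 a.1]
    exact Finset.prod_coe_sort S x
  have hsum : ∑ S ∈ (Finset.univ : Finset (Fin n)).powersetCard s,
      (∏ i ∈ S, x i) * (subSub (Vᵀ * V) S).det
      = ∑ S ∈ (Finset.univ : Finset (Fin n)).powersetCard s, (subSub (Wᵀ * W) S).det :=
    Finset.sum_congr rfl fun S _ => (hsubdet S).symm
  rw [hsum, ← coeff_sum_finsets (fun S => (subSub (Wᵀ * W) S).det) s,
    ← det_one_add_X_smul_expand]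
  have hcomm : ((1 : Matrix (Fin n) (Fin n) ℝ[X]) +
      (Polynomial.X : ℝ[X]) • ((Wᵀ * W).map Polynomial.C)).det
      = ((1 : Matrix (Fin d) (Fin d) ℝ[X]) +
      (Polynomial.X : ℝ[X]) • ((W * Wᵀ).map Polynomial.C)).det := by
    have e1 : (Polynomial.X : ℝ[X]) • ((Wᵀ * W).map Polynomial.C)
        = ((Polynomial.X : ℝ[X]) • (Wᵀ.map Polynomial.C)) * (W.map Polynomial.C) := by
      rw [Matrix.map_mul, Matrix.smul_mul]
    have e2 : (W.map Polynomial.C) * ((Polynomial.X : ℝ[X]) • (Wᵀ.map Polynomial.C))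
        = (Polynomial.X : ℝ[X]) • ((W * Wᵀ).map Polynomial.C) := by
      rw [Matrix.mul_smul, ← Matrix.map_mul]
    rw [e1, Matrix.det_one_add_mul_comm, e2]
  rw [hcomm, hXh, det_one_add_X_smul_conj d Q hQ lam]
  have := coeff_sum_finsets (fun T : Finset (Fin d) => ∏ i ∈ T, lam i) s
  rw [← this]
  congr 1
  -- (∏ i, (1 + C (lam i) * X)) = ∑ T, X ^ T.card * C (∏ lam)
  have hexp := Finset.prod_add (fun i : Fin d => Polynomial.C (lam i) * Polynomial.X)
    (fun _ => (1 : ℝ[X])) Finset.univ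
  simp only [Finset.prod_const_one, mul_one] at hexp
  rw [show (∏ i : Fin d, ((1 : ℝ[X]) + Polynomial.C (lam i) * Polynomial.X))
      = ∏ i : Fin d, (Polynomial.C (lam i) * Polynomial.X + 1) from
    Finset.prod_congr rfl fun i _ => add_comm _ _, hexp, Finset.powerset_univ]
  refine Finset.sum_congr rfl fun T _ => ?_
  rw [Finset.prod_mul_distrib, Finset.prod_const, map_prod]
  ring


lemma esym_top_tail {d : ℕ} (lam : Fin d → ℝ) (hnn : ∀ i, 0 ≤ lam i) (k s : ℕ) (hks : k ≤ s)
    (K B : Finset (Fin d)) (hKB : Disjoint K B) (hKcard : K.card = k) :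
    (∏ i ∈ K, lam i) * esym B (s - k) lam ≤ esym Finset.univ s lam := by
  classical
  rw [esym, Finset.mul_sum]
  have hstep : ∑ T ∈ B.powersetCard (s - k), (∏ i ∈ K, lam i) * ∏ i ∈ T, lam i
      = ∑ U ∈ (B.powersetCard (s - k)).image (fun T => K ∪ T), ∏ i ∈ U, lam i := by
    rw [Finset.sum_image ?hinj]
    · refine Finset.sum_congr rfl fun T hT => ?_
      have hTB : T ⊆ B := (Finset.mem_powersetCard.mp hT).1
      exact (Finset.prod_union (hKB.mono_right hTB)).symm
    case hinj =>
      intro T1 h1 T2 h2 heq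
      have hT1 : T1 ⊆ B := (Finset.mem_powersetCard.mp h1).1
      have hT2 : T2 ⊆ B := (Finset.mem_powersetCard.mp h2).1
      have e1 : (K ∪ T1) \ K = T1 := Finset.union_sdiff_cancel_left (hKB.mono_right hT1)
      have e2 : (K ∪ T2) \ K = T2 := Finset.union_sdiff_cancel_left (hKB.mono_right hT2)
      rw [← e1, ← e2, show K ∪ T1 = K ∪ T2 from heq]
  rw [hstep, esym]
  refine Finset.sum_le_sum_of_subset_of_nonneg ?_ ?_
  · intro U hU
    obtain ⟨T, hT, rfl⟩ := Finset.mem_image.mp hU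
    obtain ⟨hTB, hTcard⟩ := Finset.mem_powersetCard.mp hT
    refine Finset.mem_powersetCard.mpr ⟨Finset.subset_univ _, ?_⟩
    rw [Finset.card_union_of_disjoint (hKB.mono_right hTB), hKcard, hTcard]
    omega
  · intro U _ _
    exact Finset.prod_nonneg fun i _ => hnn i

/-- Sampling a size-`s` set with probability proportional to `∏_{i∈S} x̂ᵢ`
is well defined (`D > 0`) and the expected subdeterminant satisfies
`E[det(C_{S̃,S̃})] ≥ ((s/n)^s C(n,s))⁻¹ exp(Γ_s(∑ x̂ᵢ vᵢvᵢᵀ))`. -/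
theorem stmt_9 (d n s : ℕ) (hs1 : 1 ≤ s) (hsd : s ≤ d)
    (V : Matrix (Fin d) (Fin n) ℝ)
    (x : Fin n → ℝ) (hx0 : ∀ i, 0 ≤ x i) (hx1 : ∀ i, x i ≤ 1) (hxs : ∑ i, x i = s)
    (lam : Fin d → ℝ) (hsort : Antitone lam) (hnn : ∀ i, 0 ≤ lam i)
    (hdecomp : IsSpectralDecomp
      (∑ i, x i • vecMulVec (fun a => V a i) (fun a => V a i)) lam)
    (k : ℕ) (hk : IsKIndex lam s k) :
    0 < ∑ S ∈ Finset.univ.powersetCard s, ∏ i ∈ S, x i ∧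
    (((s : ℝ) / n) ^ s * (n.choose s))⁻¹ *
        ((∏ i ∈ Finset.univ.filter (fun i : Fin d => (i : ℕ) < k), lam i)
          * (tailSum lam k / ((s : ℝ) - k)) ^ (s - k))
      ≤ (∑ S ∈ Finset.univ.powersetCard s, ∏ i ∈ S, x i)⁻¹ *
        ∑ S ∈ Finset.univ.powersetCard s,
          (∏ i ∈ S, x i) * (subSub (Vᵀ * V) S).det := by
  classical
  obtain ⟨Q, hQ, hdec⟩ := hdecomp
  obtain ⟨hk1, hk2, _⟩ := hk
  have hks : k ≤ s := le_of_lt hk1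
  have hkd : k < d := lt_of_lt_of_le hk1 hsd
  -- n ≥ 1
  have hn1 : 1 ≤ n := by
    by_contra h
    push_neg at h
    have hn0 : n = 0 := by omega
    subst hn0
    simp at hxs
    have : s = 0 := by exact_mod_cast hxs.symm
    omega
  have hnR : (0:ℝ) < n := by exact_mod_cast hn1
  -- D > 0
  set D := ∑ S ∈ Finset.univ.powersetCard s, ∏ i ∈ S, x i with hDdef
  have hD : 0 < D := by
    set P := Finset.univ.filter (fun i => 0 < x i) with hP
    have hPsum : ∑ i ∈ P, x i = (s:ℝ) := by
      rw [← hxs]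
      refine Finset.sum_subset (Finset.filter_subset _ _) fun i _ hni => ?_
      rw [hP, Finset.mem_filter] at hni
      push_neg at hni
      have := hni (Finset.mem_univ i)
      linarith [hx0 i]
    have hcardP : s ≤ P.card := by
      have h1 : ∑ i ∈ P, x i ≤ (P.card : ℝ) * 1 := by
        have := Finset.sum_le_card_nsmul P x 1 (fun i _ => hx1 i)
        rwa [nsmul_eq_mul] at this
      rw [hPsum, mul_one] at h1
      exact_mod_cast h1
    obtain ⟨S0, hS0P, hS0card⟩ := Finset.exists_subset_card_eq hcardP
    refine Finset.sum_pos' (fun S _ => Finset.prod_nonneg fun i _ => hx0 i) ⟨S0, ?_, ?_⟩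
    · exact Finset.mem_powersetCard.mpr ⟨Finset.subset_univ _, hS0card⟩
    · refine Finset.prod_pos fun i hi => ?_
      have := hS0P hi
      rw [hP, Finset.mem_filter] at this
      exact this.2
  refine ⟨hD, ?_⟩
  -- key identity
  have hkey := key_identity V x hx0 lam Q hQ hdec s
  set e := ∑ T ∈ (Finset.univ : Finset (Fin d)).powersetCard s, ∏ i ∈ T, lam i with hedef
  have he0 : 0 ≤ e :=
    Finset.sum_nonneg fun T _ => Finset.prod_nonneg fun i _ => hnn i
  -- Maclaurin: D ≤ (s/n)^s * choose n s
  have hDle : D ≤ ((s : ℝ) / n) ^ s * (n.choose s) := by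
    have hmac := maclaurin_aux s (Finset.univ : Finset (Fin n)) ((s:ℝ)/n)
      ((Finset.univ.filter (fun i => x i ≠ (s:ℝ)/n)).card) x le_rfl (fun i _ => hx0 i) ?hsum
    case hsum =>
      rw [hxs, Finset.card_univ, Fintype.card_fin]
      field_simp
    rw [Finset.card_univ, Fintype.card_fin] at hmac
    calc D = esym Finset.univ s x := rfl
      _ ≤ (n.choose s : ℝ) * ((s:ℝ)/n) ^ s := hmac
      _ = ((s : ℝ) / n) ^ s * (n.choose s) := mul_comm _ _
  have hApos : (0:ℝ) < ((s : ℝ) / n) ^ s * (n.choose s) := lt_of_lt_of_le hD hDle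
  -- tail bound
  set K := Finset.univ.filter (fun i : Fin d => (i : ℕ) < k) with hKdef
  set B := Finset.univ.filter (fun i : Fin d => k ≤ (i : ℕ)) with hBdef
  have hKB : Disjoint K B := by
    rw [Finset.disjoint_filter]
    intro i _ h1
    omega
  have hKcard : K.card = k := by
    refine Finset.card_eq_of_bijective (fun i hik => ⟨i, lt_of_lt_of_le hik hkd.le⟩) ?_ ?_ ?_
    · intro a ha
      rw [hKdef, Finset.mem_filter] at ha
      exact ⟨a.1, ha.2, by simp⟩
    · intro i hik
      rw [hKdef, Finset.mem_filter]
      exact ⟨Finset.mem_univ _, hik⟩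
    · intro i j hi hj hij
      simpa [Fin.mk.injEq] using hij
  have hsk_pos : (0:ℝ) < (s:ℝ) - k := by
    have : (k:ℝ) < s := by exact_mod_cast hk1
    linarith
  have hG : (∏ i ∈ Finset.univ.filter (fun i : Fin d => (i : ℕ) < k), lam i)
      * (tailSum lam k / ((s : ℝ) - k)) ^ (s - k) ≤ e := by
    have hT0 : 0 ≤ tailSum lam k := Finset.sum_nonneg fun i _ => hnn i
    have hKprod : 0 ≤ ∏ i ∈ K, lam i := Finset.prod_nonneg fun i _ => hnn i
    rcases eq_or_lt_of_le hT0 with hTz | hTpos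
    · rw [← hTz, zero_div, zero_pow (by omega : s - k ≠ 0), mul_zero]
      exact he0
    · set c := tailSum lam k / ((s : ℝ) - k) with hcdef
      have hc : 0 < c := div_pos hTpos hsk_pos
      have hble : ∀ i ∈ B, lam i ≤ c := by
        intro i hi
        rw [hBdef, Finset.mem_filter] at hi
        have h1 : lam i ≤ lam ⟨k, hkd⟩ := hsort (by
          rw [Fin.le_def]
          exact hi.2)
        refine le_trans h1 ?_
        have := hk2
        rw [extVal, dif_pos hkd] at this
        exact this
      have hsumB : ∑ i ∈ B, lam i = ((s - k : ℕ) : ℝ) * c := by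
        rw [hcdef, Nat.cast_sub hks]
        field_simp
        rfl
      have h1 : c ^ (s - k) ≤ esym B (s - k) lam :=
        esym_lower_aux (s - k) B c hc _ lam le_rfl
          (fun i _ => hnn i) hble hsumB
      have h2 : (∏ i ∈ K, lam i) * esym B (s - k) lam ≤ esym Finset.univ s lam :=
        esym_top_tail lam hnn k s hks K B hKB hKcard
      calc (∏ i ∈ K, lam i) * c ^ (s - k)
          ≤ (∏ i ∈ K, lam i) * esym B (s - k) lam :=
            mul_le_mul_of_nonneg_left h1 hKprod
        _ ≤ esym Finset.univ s lam := h2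
        _ = e := rfl
  -- final chain
  calc (((s : ℝ) / n) ^ s * (n.choose s))⁻¹ *
        ((∏ i ∈ Finset.univ.filter (fun i : Fin d => (i : ℕ) < k), lam i)
          * (tailSum lam k / ((s : ℝ) - k)) ^ (s - k))
      ≤ (((s : ℝ) / n) ^ s * (n.choose s))⁻¹ * e :=
        mul_le_mul_of_nonneg_left hG (inv_nonneg.mpr hApos.le)
    _ ≤ D⁻¹ * e := by
        refine mul_le_mul_of_nonneg_right ?_ he0
        exact inv_anti₀ hD hDle
    _ = D⁻¹ * ∑ S ∈ Finset.univ.powersetCard s,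
          (∏ i ∈ S, x i) * (subSub (Vᵀ * V) S).det := by rw [hkey]
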